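/- arXiv:2301.03219 — 7 statements merged into one kernel-verified Lean document; each statement's English description precedes it below -/
import Mathlib

section
/- Let R be a ring with identity, n ≥ 2, and let {s_ijk : i,j,k ∈ {1,…,n}} be a factor system over R. Then the multiplication defined on n×n matrices over R by (A·B)_{ij} = Σ_{k=1}^n s_{ikj}·a_{ik}·b_{kj} is associative: (A·B)·C = A·(B·C) for all n×n matrices A, B, C over R. -/
/-- The twisted product of `n × n` matrices over `R` with respect to a family
`s : Fin n → Fin n → Fin n → R`:  `(A · B) i j = ∑ k, s i k j * A i k * B k j`. -/
def twistedMul {R : Type*} [Ring R] {n : ℕ} (s : Fin n → Fin n → Fin n → R)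
    (A B : Matrix (Fin n) (Fin n) R) : Matrix (Fin n) (Fin n) R :=
  fun i j => ∑ k, s i k j * A i k * B k j

/-- The twisted multiplication attached to a factor system is associative. -/
theorem twistedMul_assoc {R : Type*} [Ring R] {n : ℕ} (hn : 2 ≤ n)
    (s : Fin n → Fin n → Fin n → R)
    (hcentral : ∀ i j k, s i j k ∈ Subring.center R)
    (hs1 : ∀ i k, s i i k = 1) (hs2 : ∀ i k, s i k k = 1)
    (hrel : ∀ i j k l, s i j k * s i k l = s i j l * s j k l)
    (A B C : Matrix (Fin n) (Fin n) R) :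
    twistedMul s (twistedMul s A B) C = twistedMul s A (twistedMul s B C) := by
  have hc : ∀ i j k (x : R), s i j k * x = x * s i j k := fun i j k x =>
    (Subring.mem_center_iff.mp (hcentral i j k) x).symm
  funext i j
  simp only [twistedMul, Finset.sum_mul, Finset.mul_sum]
  rw [Finset.sum_comm]
  refine Finset.sum_congr rfl fun k _ => Finset.sum_congr rfl fun m _ => ?_
  have key : s i k m * s i m j = s i k j * s k m j := hrel i k m j
  calc s i m j * (s i k m * A i k * B k m) * C m j
      = (s i k m * s i m j) * (A i k * B k m * C m j) := by
        rw [hc i m j (s i k m * A i k * B k m)]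
        simp only [mul_assoc]
        rw [← mul_assoc (s i m j) (A i k), hc i m j (A i k), mul_assoc,
          ← mul_assoc (s i m j) (B k m), hc i m j (B k m), mul_assoc]
    _ = (s i k j * s k m j) * (A i k * B k m * C m j) := by rw [key]
    _ = s i k j * A i k * (s k m j * B k m * C m j) := by
        simp only [mul_assoc]
        rw [← mul_assoc (s k m j) (A i k), hc k m j (A i k), mul_assoc]
end

section
/- Let R be a ring with identity, n ≥ 2, and let {s_ijk} be a factor system over R. Then for all pairwise distinct indices i, j, k ∈ {1,…,n} the following relations hold: s_iji = s_ijk·s_jik = s_kij·s_kji; s_jkj = s_jki·s_kji = s_ijk·s_ikj; and s_iki = s_ikj·s_kij = s_jik·s_jki. -/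
/-- Relations (3): for a factor system `s` and pairwise distinct indices `i, j, k`,
`s_iji = s_ijk * s_jik = s_kij * s_kji`, `s_jkj = s_jki * s_kji = s_ijk * s_ikj`,
and `s_iki = s_ikj * s_kij = s_jik * s_jki`. -/
theorem factorSystem_relations_three {R : Type*} [Ring R] {n : ℕ} (hn : 2 ≤ n)
    (s : Fin n → Fin n → Fin n → R)
    (hcentral : ∀ i j k, s i j k ∈ Subring.center R)
    (hs1 : ∀ i k, s i i k = 1) (hs2 : ∀ i k, s i k k = 1)
    (hrel : ∀ i j k l, s i j k * s i k l = s i j l * s j k l)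
    (i j k : Fin n) (hij : i ≠ j) (hik : i ≠ k) (hjk : j ≠ k) :
    (s i j i = s i j k * s j i k ∧ s i j i = s k i j * s k j i) ∧
    (s j k j = s j k i * s k j i ∧ s j k j = s i j k * s i k j) ∧
    (s i k i = s i k j * s k i j ∧ s i k i = s j i k * s j k i) := by
  refine ⟨⟨?_, ?_⟩, ⟨?_, ?_⟩, ⟨?_, ?_⟩⟩
  · have h := hrel i j i k; simpa [hs1] using h
  · have h := hrel k i j i; simpa [hs2] using h.symm
  · have h := hrel j k j i; simpa [hs1] using h
  · have h := hrel i j k j; simpa [hs2] using h.symm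
  · have h := hrel i k i j; simpa [hs1] using h
  · have h := hrel j i k i; simpa [hs2] using h.symm
end

section
/- Let R be a ring with identity, n ≥ 2, let {s_ijk} be a factor system over R, let τ be a permutation of {1,…,n}, and set t_ijk = s_{τ(i)τ(j)τ(k)}. For an n×n matrix A = (a_ij) over R, let φ(A) denote the matrix with (i,j) entry a_{τ(i)τ(j)}. Then for all n×n matrices A, B over R, φ(A ∗_s B) = φ(A) ∗_t φ(B), where (A ∗_s B)_{ij} = Σ_{k=1}^n s_{ikj}·a_{ik}·b_{kj} and (C ∗_t D)_{ij} = Σ_{k=1}^n t_{ikj}·c_{ik}·d_{kj}. (Together with the obvious additivity and bijectivity of φ, this shows that the formal matrix rings M(n,R,Σ) and M(n,R,τΣ) are isomorphic under the correspondence A → τA.) -/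
/-- The map `A ↦ τA`, `(τA) i j = A (τ i) (τ j)`, is multiplicative from the twisted
multiplication of the factor system `s` to that of the permuted factor system
`t i j k = s (τ i) (τ j) (τ k)`.  (Together with additivity and bijectivity, this
gives the ring isomorphism `M(n, R, Σ) ≅ M(n, R, τΣ)`.) -/
theorem permute_twistedMul {R : Type*} [Ring R] {n : ℕ} (hn : 2 ≤ n)
    (s : Fin n → Fin n → Fin n → R)
    (hcentral : ∀ i j k, s i j k ∈ Subring.center R)
    (hs1 : ∀ i k, s i i k = 1) (hs2 : ∀ i k, s i k k = 1)
    (hrel : ∀ i j k l, s i j k * s i k l = s i j l * s j k l)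
    (τ : Equiv.Perm (Fin n)) (A B : Matrix (Fin n) (Fin n) R) :
    let t : Fin n → Fin n → Fin n → R := fun i j k => s (τ i) (τ j) (τ k)
    let φ : Matrix (Fin n) (Fin n) R → Matrix (Fin n) (Fin n) R :=
      fun M => fun i j => M (τ i) (τ j)
    φ (twistedMul s A B) = twistedMul t (φ A) (φ B) := by
  intro t φ
  funext i j
  simp only [twistedMul, φ, t]
  exact (Fintype.sum_equiv τ _ _ (fun k => rfl)).symm
end

section
/- Let R be a ring with identity, n ≥ 2, and let {s_ijk} be a factor system over R such that every element s_ijk is either non-invertible in R or equal to 1. Let i, j, k ∈ {1,…,n} be pairwise distinct. Then the three elements s_iji, s_iki, s_jkj satisfy exactly one of the following three conditions: (1) all three elements are equal to 1; (2) exactly two of these three elements are non-invertible and the third one is equal to 1; (3) all three elements are non-invertible. -/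
private lemma aux_unit {R : Type*} [Ring R] {c u w : R} (hu : IsUnit u) (hw : IsUnit w)
    (h : c * u = w) : IsUnit c := by
  rcases hu with ⟨U, rfl⟩
  have hc : c = w * ↑U⁻¹ := by
    rw [← h, mul_assoc, Units.mul_inv, mul_one]
  rw [hc]
  exact hw.mul (Units.isUnit _)

/-- Lemma 2.1: if every factor of a factor system is non-invertible or equal to `1`,
then for pairwise distinct `i, j, k` the elements `s_iji`, `s_iki`, `s_jkj` satisfy
exactly one of: (1) all three equal `1`; (2) exactly two are non-invertible and the
third equals `1`; (3) all three are non-invertible. -/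
theorem factorSystem_trichotomy {R : Type*} [Ring R] {n : ℕ} (hn : 2 ≤ n)
    (s : Fin n → Fin n → Fin n → R)
    (hcentral : ∀ i j k, s i j k ∈ Subring.center R)
    (hs1 : ∀ i k, s i i k = 1) (hs2 : ∀ i k, s i k k = 1)
    (hrel : ∀ i j k l, s i j k * s i k l = s i j l * s j k l)
    (hbin : ∀ i j k, ¬ IsUnit (s i j k) ∨ s i j k = 1)
    (i j k : Fin n) (hij : i ≠ j) (hik : i ≠ k) (hjk : j ≠ k) :
    let a := s i j i; let b := s i k i; let c := s j k j
    let P1 := a = 1 ∧ b = 1 ∧ c = 1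
    let P2 := (¬ IsUnit a ∧ ¬ IsUnit b ∧ c = 1) ∨ (¬ IsUnit a ∧ ¬ IsUnit c ∧ b = 1) ∨
      (¬ IsUnit b ∧ ¬ IsUnit c ∧ a = 1)
    let P3 := ¬ IsUnit a ∧ ¬ IsUnit b ∧ ¬ IsUnit c
    (P1 ∧ ¬ P2 ∧ ¬ P3) ∨ (P2 ∧ ¬ P1 ∧ ¬ P3) ∨ (P3 ∧ ¬ P1 ∧ ¬ P2) := by
  intro a b c P1 P2 P3
  -- diagonal symmetries
  have hsjij : s i j i = s j i j := by simpa [hs1, hs2] using hrel i j i j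
  have hskik : s i k i = s k i k := by simpa [hs1, hs2] using hrel i k i k
  have hskjk : s j k j = s k j k := by simpa [hs1, hs2] using hrel j k j k
  -- two-sided inverse pairs
  have hx : s i j k * s i k j = s j k j := by simpa [hs2] using hrel i j k j
  have hx' : s i k j * s i j k = s j k j := by
    have h := hrel i k j k; rw [hs2, one_mul, ← hskjk] at h; exact h
  have hy : s j i k * s j k i = s i k i := by simpa [hs2] using hrel j i k i
  have hy' : s j k i * s j i k = s i k i := by
    have h := hrel j k i k; rw [hs2, one_mul, ← hskik] at h; exact h
  have hz : s k i j * s k j i = s i j i := by simpa [hs2] using hrel k i j i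
  have hz' : s k j i * s k i j = s i j i := by
    have h := hrel k j i j; rw [hs2, one_mul, ← hsjij] at h; exact h
  -- mixed relations
  have he1 : s i j k * s i k i = s i j i * s j k i := hrel i j k i
  have he2 : s k i j * s j k j = s i k i * s i j k := by
    have h := hrel k i j k; rw [← hskjk, ← hskik] at h; exact h
  have he3 : s j k i * s i j i = s j k j * s k i j := by
    have h := hrel j k i j; rw [← hsjij] at h; exact h
  -- units from pairs
  have unitx : c = 1 → IsUnit (s i j k) := fun h =>
    isUnit_iff_exists.mpr ⟨s i k j, hx.trans h, hx'.trans h⟩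
  have unity' : b = 1 → IsUnit (s j k i) := fun h =>
    isUnit_iff_exists.mpr ⟨s j i k, hy'.trans h, hy.trans h⟩
  have unitz : a = 1 → IsUnit (s k i j) := fun h =>
    isUnit_iff_exists.mpr ⟨s k j i, hz.trans h, hz'.trans h⟩
  -- "exactly one non-invertible" is impossible
  have hAu : b = 1 → c = 1 → IsUnit a := by
    intro hb hc
    have h1 : a * s j k i = s i j k := by
      have := he1; rw [show s i k i = 1 from hb, mul_one] at this; exact this.symm
    exact aux_unit (unity' hb) (unitx hc) h1
  have hBu : a = 1 → c = 1 → IsUnit b := by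
    intro ha hc
    have h1 : b * s i j k = s k i j := by
      have := he2; rw [show s j k j = 1 from hc, mul_one] at this; exact this.symm
    exact aux_unit (unitx hc) (unitz ha) h1
  have hCu : a = 1 → b = 1 → IsUnit c := by
    intro ha hb
    have h1 : c * s k i j = s j k i := by
      have := he3; rw [show s i j i = 1 from ha, mul_one] at this; exact this.symm
    exact aux_unit (unitz ha) (unity' hb) h1
  have u1 : ∀ {r : R}, r = 1 → IsUnit r := fun h => h ▸ isUnit_one
  rcases hbin i j i with hA | hA <;> rcases hbin i k i with hB | hB <;>
    rcases hbin j k j with hC | hC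
  · exact Or.inr (Or.inr ⟨⟨hA, hB, hC⟩,
      fun h => hA (u1 h.1),
      fun h => h.elim (fun h' => hC (u1 h'.2.2))
        (fun h' => h'.elim (fun h'' => hB (u1 h''.2.2)) (fun h'' => hA (u1 h''.2.2)))⟩)
  · exact Or.inr (Or.inl ⟨Or.inl ⟨hA, hB, hC⟩,
      fun h => hA (u1 h.1), fun h => h.2.2 (u1 hC)⟩)
  · exact Or.inr (Or.inl ⟨Or.inr (Or.inl ⟨hA, hC, hB⟩),
      fun h => hA (u1 h.1), fun h => h.2.1 (u1 hB)⟩)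
  · exact absurd (hAu hB hC) hA
  · exact Or.inr (Or.inl ⟨Or.inr (Or.inr ⟨hB, hC, hA⟩),
      fun h => hB (u1 h.2.1), fun h => h.1 (u1 hA)⟩)
  · exact absurd (hBu hA hC) hB
  · exact absurd (hCu hA hB) hC
  · exact Or.inl ⟨⟨hA, hB, hC⟩,
      fun h => h.elim (fun h' => h'.1 (u1 hA))
        (fun h' => h'.elim (fun h'' => h''.1 (u1 hA)) (fun h'' => h''.1 (u1 hB))),
      fun h => h.1 (u1 hA)⟩
end

section
/- Let R be a ring with identity, n ≥ 2, and let {s_ijk} be a factor system over R such that every element s_ijk is either non-invertible in R or equal to 1. Define a binary relation ∼ on {1,…,n} by i ∼ j if and only if s_iji = 1. Then ∼ is an equivalence relation, i.e., it is reflexive, symmetric, and transitive. -/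
/-- Lemma 2.2: if every factor of a factor system is non-invertible or equal to `1`,
then the relation `i ∼ j ⟺ s i j i = 1` is an equivalence relation on `{1, …, n}`. -/
theorem factorSystem_equivalence {R : Type*} [Ring R] {n : ℕ} (hn : 2 ≤ n)
    (s : Fin n → Fin n → Fin n → R)
    (hcentral : ∀ i j k, s i j k ∈ Subring.center R)
    (hs1 : ∀ i k, s i i k = 1) (hs2 : ∀ i k, s i k k = 1)
    (hrel : ∀ i j k l, s i j k * s i k l = s i j l * s j k l)
    (hbin : ∀ i j k, ¬ IsUnit (s i j k) ∨ s i j k = 1) :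
    Equivalence (fun i j : Fin n => s i j i = 1) := by
  have hcomm : ∀ (i j k : Fin n) (x : R), s i j k * x = x * s i j k := fun i j k x =>
    (Subring.mem_center_iff.mp (hcentral i j k) x).symm
  constructor
  · intro i
    exact hs1 i i
  · intro i j hij
    have := hrel i j i j
    simp only [hij, hs1, hs2, one_mul] at this
    exact this.symm
  · intro i j k hij hjk
    -- s j i j = 1 (symmetry)
    have hji : s j i j = 1 := by
      have := hrel i j i j
      simp only [hij, hs1, hs2, one_mul] at this
      exact this.symm
    -- h1 : s j k i * s k j i = 1
    have h1 : s j k i * s k j i = 1 := by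
      have := hrel j k j i
      simp only [hjk, hs1, one_mul] at this
      exact this.symm
    -- h2 : s i j k * s i k i = s j k i
    have h2 : s i j k * s i k i = s j k i := by
      have := hrel i j k i
      simp only [hij, one_mul] at this
      exact this
    -- hence s i k i is a unit
    have hunit : IsUnit (s i k i) := by
      have hmul : s i k i * (s k j i * s i j k) = 1 := by
        rw [hcomm i k i, mul_assoc, h2, ← hcomm j k i]
        exact h1
      have hmul' : (s k j i * s i j k) * s i k i = 1 := by
        rw [← hcomm i k i]; exact hmul
      exact ⟨⟨s i k i, s k j i * s i j k, hmul, hmul'⟩, rfl⟩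
    rcases hbin i k i with h | h
    · exact absurd hunit h
    · exact h
end

section
/- Let R be a ring with identity, n ≥ 2, and let {s_ijk} be a factor system over R such that every element s_ijk is either non-invertible in R or equal to 1. Then there exists a permutation τ of {1,…,n} such that the principal factor matrix of the permuted factor system has block-diagonal form: for all indices i ≤ j ≤ k in {1,…,n}, if s_{τ(i)τ(k)τ(i)} = 1 then s_{τ(i)τ(j)τ(i)} = 1 and s_{τ(j)τ(k)τ(j)} = 1. (Equivalently, after reindexing by τ, the equivalence classes of the relation i ∼ j ⟺ s_iji = 1 are consecutive intervals, so the matrix (s_{τ(i)τ(j)τ(i)}) consists of diagonal blocks of 1s with non-invertible elements on all remaining positions.) -/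
/-- Lemma 2.3: if every factor of a factor system is non-invertible or equal to `1`,
then there is a permutation `τ` such that the permuted principal factor matrix
`(s (τ i) (τ j) (τ i))` is block diagonal: the equivalence classes of
`i ∼ j ⟺ s i j i = 1` become consecutive intervals, so blocks of `1`s stand on the
main diagonal and non-invertible elements stand on all remaining positions. -/
theorem factorSystem_canonical_form {R : Type*} [Ring R] {n : ℕ} (hn : 2 ≤ n)
    (s : Fin n → Fin n → Fin n → R)
    (hcentral : ∀ i j k, s i j k ∈ Subring.center R)
    (hs1 : ∀ i k, s i i k = 1) (hs2 : ∀ i k, s i k k = 1)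
    (hrel : ∀ i j k l, s i j k * s i k l = s i j l * s j k l)
    (hbin : ∀ i j k, ¬ IsUnit (s i j k) ∨ s i j k = 1) :
    ∃ τ : Equiv.Perm (Fin n), ∀ i j k : Fin n, i ≤ j → j ≤ k →
      s (τ i) (τ k) (τ i) = 1 → s (τ i) (τ j) (τ i) = 1 ∧ s (τ j) (τ k) (τ j) = 1 := by
  classical
  -- symmetry of the principal matrix
  have hsymm : ∀ i j, s i j i = s j i j := by
    intro i j
    have h := hrel i j i j
    rw [hs1, hs2, mul_one, one_mul] at h
    exact h
  -- if s i j i = 1 then s i j k = 1 for all k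
  have hone : ∀ i j, s i j i = 1 → ∀ k, s i j k = 1 := by
    intro i j h k
    have h1 := hrel i j i k
    rw [h, hs1, one_mul] at h1
    have hc : s j i k * s i j k = s i j k * s j i k :=
      (Subring.mem_center_iff.mp (hcentral i j k) _)
    have hu : IsUnit (s i j k) := ⟨⟨s i j k, s j i k, h1.symm, hc.trans h1.symm⟩, rfl⟩
    rcases hbin i j k with hb | hb
    · exact absurd hu hb
    · exact hb
  -- transitivity
  have htrans : ∀ i j k, s i j i = 1 → s j k j = 1 → s i k i = 1 := by
    intro i j k hij hjk
    have h := hrel i j k i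
    rw [hone i j hij k, one_mul, hij, one_mul, hone j k hjk i] at h
    exact h
  -- symmetry as an implication
  have hsym' : ∀ i j, s i j i = 1 → s j i j = 1 := by
    intro i j h; rw [hsymm j i]; exact h
  -- reflexivity
  have hrefl : ∀ i, s i i i = 1 := fun i => hs1 i i
  -- representative: least element of each class
  have hmem : ∀ i : Fin n, i ∈ Finset.univ.filter (fun j => s i j i = 1) := by
    intro i; simp [hrefl i]
  set rep : Fin n → Fin n := fun i =>
    (Finset.univ.filter (fun j => s i j i = 1)).min' ⟨i, hmem i⟩ with hrep
  have hrep_rel : ∀ i, s i (rep i) i = 1 := by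
    intro i
    have := Finset.min'_mem (Finset.univ.filter (fun j => s i j i = 1)) ⟨i, hmem i⟩
    simpa using this
  have hrep_eq : ∀ i j, s i j i = 1 → rep i = rep j := by
    intro i j h
    have hset : Finset.univ.filter (fun k => s i k i = 1)
        = Finset.univ.filter (fun k => s j k j = 1) := by
      ext k
      simp only [Finset.mem_filter, Finset.mem_univ, true_and]
      constructor
      · intro hk; exact htrans j i k (hsym' i j h) hk
      · intro hk; exact htrans i j k h hk
    simp only [hrep, hset]
  have hrep_rev : ∀ i j, rep i = rep j → s i j i = 1 := by
    intro i j h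
    have h1 : s i (rep i) i = 1 := hrep_rel i
    have h2 : s j (rep i) j = 1 := by rw [h]; exact hrep_rel j
    exact htrans i (rep i) j h1 (hsym' j (rep i) h2)
  refine ⟨Tuple.sort rep, ?_⟩
  intro i j k hij hjk h
  have hmono := Tuple.monotone_sort rep
  have e : rep (Tuple.sort rep i) = rep (Tuple.sort rep k) := hrep_eq _ _ h
  have h1 : rep (Tuple.sort rep i) ≤ rep (Tuple.sort rep j) := hmono hij
  have h2 : rep (Tuple.sort rep j) ≤ rep (Tuple.sort rep k) := hmono hjk
  have e1 : rep (Tuple.sort rep i) = rep (Tuple.sort rep j) :=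
    le_antisymm h1 (e ▸ h2)
  have e2 : rep (Tuple.sort rep j) = rep (Tuple.sort rep k) :=
    le_antisymm h2 (e ▸ h1)
  exact ⟨hrep_rev _ _ e1, hrep_rev _ _ e2⟩
end

section
/- Let R be a local ring (a nontrivial ring in which the non-invertible elements form a proper ideal, equivalently the sum of any two non-units is a non-unit) and let n, m be positive integers. If the full matrix rings M(n,R) and M(m,R) are isomorphic as rings, then n = m. (That is, every local ring satisfies the (n,m)-condition.) -/
open Matrix

section LocalFacts

variable {R : Type*} [Ring R] [IsLocalRing R]

lemma loc_add {a b : R} (ha : ¬ IsUnit a) (hb : ¬ IsUnit b) : ¬ IsUnit (a + b) := by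
  rintro ⟨u, hu⟩
  have h1 : (↑u⁻¹ * a) + (↑u⁻¹ * b) = 1 := by
    rw [← mul_add, ← hu, u.inv_mul]
  rcases IsLocalRing.isUnit_or_isUnit_of_add_one h1 with h2 | h2
  · exact ha (by simpa [Units.mul_inv_cancel_left] using u.isUnit.mul h2)
  · exact hb (by simpa [Units.mul_inv_cancel_left] using u.isUnit.mul h2)

lemma loc_idem {e : R} (he : e * e = e) : e = 0 ∨ e = 1 := by
  have h1 : e + (1 - e) = 1 := by abel
  rcases IsLocalRing.isUnit_or_isUnit_of_add_one h1 with h | h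
  · right
    exact h.mul_left_cancel (by simpa using he)
  · left
    have h2 : (1 - e) * e = (1 - e) * 0 := by
      rw [sub_mul, one_mul, he, mul_zero, sub_self]
    exact h.mul_left_cancel h2

lemma loc_unit_left {a b : R} (h : IsUnit (a * b)) : IsUnit a := by
  obtain ⟨u, hu⟩ := h
  set c := b * (↑u⁻¹ : R) with hc
  have hac : a * c = 1 := by
    rw [hc, ← mul_assoc, ← hu, u.mul_inv]
  have hidem : (c * a) * (c * a) = c * a := by
    rw [mul_assoc, ← mul_assoc a c, hac, one_mul]
  rcases loc_idem hidem with h0 | h1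
  · exfalso
    have : c = 0 := by
      have h2 : c * (a * c) = c := by rw [hac, mul_one]
      rw [← mul_assoc, h0, zero_mul] at h2
      exact h2.symm
    rw [this, mul_zero] at hac
    exact one_ne_zero hac.symm
  · exact ⟨⟨a, c, hac, h1⟩, rfl⟩

lemma loc_unit_right {a b : R} (h : IsUnit (a * b)) : IsUnit b := by
  obtain ⟨u, hu⟩ := h
  set c := (↑u⁻¹ : R) * a with hc
  have hcb : c * b = 1 := by
    rw [hc, mul_assoc, ← hu, u.inv_mul]
  have hidem : (b * c) * (b * c) = b * c := by
    rw [mul_assoc, ← mul_assoc c b, hcb, one_mul]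
  rcases loc_idem hidem with h0 | h1
  · exfalso
    have : b = 0 := by
      have h2 : b * (c * b) = b := by rw [hcb, mul_one]
      rw [← mul_assoc, h0, zero_mul] at h2
      exact h2.symm
    rw [this, mul_zero] at hcb
    exact one_ne_zero hcb.symm
  · exact ⟨⟨b, c, h1, hcb⟩, rfl⟩

lemma loc_mul_left {a : R} (b : R) (ha : ¬ IsUnit a) : ¬ IsUnit (b * a) :=
  fun h => ha (loc_unit_right h)

lemma loc_mul_right {a : R} (b : R) (ha : ¬ IsUnit a) : ¬ IsUnit (a * b) :=
  fun h => ha (loc_unit_left h)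

lemma loc_sum {ι : Type*} (s : Finset ι) (f : ι → R) (h : ∀ i ∈ s, ¬ IsUnit (f i)) :
    ¬ IsUnit (∑ i ∈ s, f i) := by
  refine Finset.sum_induction f (fun x => ¬ IsUnit x) (fun a b ha hb => loc_add ha hb) ?_ h
  exact not_isUnit_zero

end LocalFacts

section Blocks

variable {R : Type*} [Ring R]

lemma isUnit_oneByOne (M : Matrix (Fin 1) (Fin 1) R) (h : IsUnit (M 0 0)) : IsUnit M := by
  obtain ⟨u, hu⟩ := h
  refine isUnit_iff_exists.mpr ⟨Matrix.of (fun _ _ => (↑u⁻¹ : R)), ?_, ?_⟩ <;>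
  · ext i j
    fin_cases i; fin_cases j
    simp [Matrix.mul_apply, Matrix.one_apply, ← hu]

lemma isUnit_upperTriangular {p q : Type*} [Fintype p] [Fintype q] [DecidableEq p] [DecidableEq q]
    (X : Matrix p q R) :
    IsUnit (fromBlocks (1 : Matrix p p R) X (0 : Matrix q p R) (1 : Matrix q q R)) := by
  refine isUnit_iff_exists.mpr
    ⟨fromBlocks (1 : Matrix p p R) (-X) (0 : Matrix q p R) (1 : Matrix q q R), ?_, ?_⟩ <;>
  · rw [← Matrix.fromBlocks_one (l := p) (m := q) (α := R)]
    simp [Matrix.fromBlocks_multiply]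

lemma isUnit_lowerTriangular {p q : Type*} [Fintype p] [Fintype q] [DecidableEq p] [DecidableEq q]
    (Y : Matrix q p R) :
    IsUnit (fromBlocks (1 : Matrix p p R) (0 : Matrix p q R) Y (1 : Matrix q q R)) := by
  refine isUnit_iff_exists.mpr
    ⟨fromBlocks (1 : Matrix p p R) (0 : Matrix p q R) (-Y) (1 : Matrix q q R), ?_, ?_⟩ <;>
  · rw [← Matrix.fromBlocks_one (l := p) (m := q) (α := R)]
    simp [Matrix.fromBlocks_multiply]

lemma isUnit_blockDiag {p q : Type*} [Fintype p] [Fintype q] [DecidableEq p] [DecidableEq q]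
    {A : Matrix p p R} {D : Matrix q q R} (hA : IsUnit A) (hD : IsUnit D) :
    IsUnit (fromBlocks A 0 0 D) := by
  obtain ⟨A', hA1, hA2⟩ := isUnit_iff_exists.mp hA
  obtain ⟨D', hD1, hD2⟩ := isUnit_iff_exists.mp hD
  refine isUnit_iff_exists.mpr ⟨fromBlocks A' 0 0 D', ?_, ?_⟩ <;>
  · rw [← Matrix.fromBlocks_one (l := p) (m := q) (α := R)]
    simp [Matrix.fromBlocks_multiply, hA1, hA2, hD1, hD2]

lemma isUnit_fromBlocks₁₁ {p q : Type*} [Fintype p] [Fintype q] [DecidableEq p] [DecidableEq q]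
    (A : Matrix p p R) (B : Matrix p q R) (C : Matrix q p R) (D : Matrix q q R)
    [Invertible A] (hS : IsUnit (D - C * ⅟A * B)) : IsUnit (fromBlocks A B C D) := by
  have key : fromBlocks A B C D =
      fromBlocks 1 0 (C * ⅟ A) 1 * fromBlocks A 0 0 (D - C * ⅟ A * B) *
        fromBlocks 1 (⅟ A * B) 0 1 := by
    simp only [fromBlocks_multiply, Matrix.mul_zero, Matrix.zero_mul, add_zero, zero_add,
      Matrix.one_mul, Matrix.mul_one, invOf_mul_self, Matrix.mul_invOf_cancel_left,
      Matrix.invOf_mul_cancel_right, Matrix.mul_assoc, add_sub_cancel]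
  rw [key]
  exact ((isUnit_lowerTriangular (C * ⅟ A)).mul
    (isUnit_blockDiag (isUnit_of_invertible A) hS)).mul (isUnit_upperTriangular (⅟ A * B))

end Blocks

section Core

variable {R : Type*} [Ring R] [IsLocalRing R]

/-- Core lemma: if all entries of `A` are nonunits (over a local ring), then `1 - A`
is a unit. -/
lemma one_sub_isUnit : ∀ (s : ℕ) (A : Matrix (Fin s) (Fin s) R),
    (∀ i j, ¬ IsUnit (A i j)) → IsUnit (1 - A) := by
  intro s
  induction s with
  | zero =>
    intro A _
    have h : (1 - A : Matrix (Fin 0) (Fin 0) R) = 1 := Subsingleton.elim _ _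
    rw [h]; exact isUnit_one
  | succ s ih =>
    intro A hA
    set e : Fin 1 ⊕ Fin s ≃ Fin (s + 1) := finSumFinEquiv.trans (finCongr (Nat.add_comm 1 s))
      with he
    set G : Matrix (Fin 1 ⊕ Fin s) (Fin 1 ⊕ Fin s) R := (1 - A).submatrix e e with hG
    have hGe : ∀ x y, G x y = (1 - A) (e x) (e y) := fun x y => rfl
    -- off-diagonal entries of G at mixed indices are negatives of entries of A
    have hone : ∀ x y : Fin 1 ⊕ Fin s, (1 : Matrix (Fin 1 ⊕ Fin s) (Fin 1 ⊕ Fin s) R) x y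
        = (1 : Matrix (Fin (s+1)) (Fin (s+1)) R) (e x) (e y) := by
      intro x y
      simp [Matrix.one_apply, e.injective.eq_iff]
    have hGsub : ∀ x y, (1 : Matrix (Fin 1 ⊕ Fin s) (Fin 1 ⊕ Fin s) R) x y - G x y
        = A (e x) (e y) := by
      intro x y
      rw [hGe, hone, Matrix.sub_apply, sub_sub_cancel]
    -- the (1,1) block is a unit
    have h11 : IsUnit G.toBlocks₁₁ := by
      apply isUnit_oneByOne
      have hE : G.toBlocks₁₁ 0 0 = 1 - A (e (Sum.inl 0)) (e (Sum.inl 0)) := by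
        show G (Sum.inl 0) (Sum.inl 0) = _
        rw [hGe, Matrix.sub_apply, Matrix.one_apply_eq]
      rw [hE]
      have h1 : A (e (Sum.inl 0)) (e (Sum.inl 0)) + (1 - A (e (Sum.inl 0)) (e (Sum.inl 0))) = 1 :=
        by abel
      rcases IsLocalRing.isUnit_or_isUnit_of_add_one h1 with h | h
      · exact absurd h (hA _ _)
      · exact h
    obtain ⟨inv11⟩ := h11.nonempty_invertible
    -- Schur complement
    set S : Matrix (Fin s) (Fin s) R :=
      G.toBlocks₂₂ - G.toBlocks₂₁ * ⅟(G.toBlocks₁₁) * G.toBlocks₁₂ with hS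
    have hSentries : ∀ i j, ¬ IsUnit ((1 - S) i j) := by
      intro i j
      have expand : (1 - S) i j =
          ((1 : Matrix (Fin s) (Fin s) R) i j - G.toBlocks₂₂ i j)
            + (G.toBlocks₂₁ * ⅟(G.toBlocks₁₁) * G.toBlocks₁₂) i j := by
        rw [hS]
        simp only [Matrix.sub_apply, Matrix.add_apply, Matrix.one_apply]
        abel
      rw [expand]
      apply loc_add
      · -- first summand is an entry of A
        have : (1 : Matrix (Fin s) (Fin s) R) i j
            = (1 : Matrix (Fin 1 ⊕ Fin s) (Fin 1 ⊕ Fin s) R) (Sum.inr i) (Sum.inr j) := by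
          simp [Matrix.one_apply, Sum.inr.injEq]
        rw [this]
        have h2 : G.toBlocks₂₂ i j = G (Sum.inr i) (Sum.inr j) := rfl
        rw [h2, hGsub]
        exact hA _ _
      · -- second summand: sum of products with nonunit factors
        rw [Matrix.mul_apply]
        apply loc_sum
        intro l _
        apply loc_mul_left
        have h3 : G.toBlocks₁₂ l j = G (Sum.inl l) (Sum.inr j) := rfl
        have h4 : G (Sum.inl l) (Sum.inr j) = - A (e (Sum.inl l)) (e (Sum.inr j)) := by
          rw [hGe, Matrix.sub_apply, Matrix.one_apply_ne (by simp [e.injective.ne_iff]), zero_sub]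
        rw [h3, h4, IsUnit.neg_iff]
        exact hA _ _
    have hSunit : IsUnit S := by
      have := ih (1 - S) hSentries
      rwa [sub_sub_cancel] at this
    have hGunit : IsUnit G := by
      rw [← fromBlocks_toBlocks G]
      exact isUnit_fromBlocks₁₁ _ _ _ _ hSunit
    have hfinal : (1 - A) = (Matrix.reindexAlgEquiv ℕ R e) G := by
      rw [hG]
      simp [Matrix.reindexAlgEquiv_apply, Matrix.reindex_apply, Matrix.submatrix_submatrix,
        Equiv.self_comp_symm, Matrix.submatrix_id_id]
    rw [hfinal]
    exact hGunit.map (Matrix.reindexAlgEquiv ℕ R e)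

end Core

section Residue

variable (R : Type*) [Ring R] [IsLocalRing R]

/-- The congruence relation on a (possibly noncommutative) local ring identifying elements whose
difference is a nonunit. -/
def nonunitsCon : RingCon R where
  r a b := ¬ IsUnit (a - b)
  iseqv := by
    refine ⟨fun a => by simp [not_isUnit_zero], fun {a b} h => ?_, fun {a b c} h1 h2 => ?_⟩
    · rw [show b - a = -(a - b) by abel, IsUnit.neg_iff]
      exact h
    · rw [show a - c = (a - b) + (b - c) by abel]
      exact loc_add h1 h2
  mul' := by
    intro a b c d h1 h2
    show ¬ IsUnit (a * c - b * d)
    have h1' : ¬ IsUnit (a - b) := h1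
    have h2' : ¬ IsUnit (c - d) := h2
    rw [show a * c - b * d = a * (c - d) + (a - b) * d by noncomm_ring]
    exact loc_add (loc_mul_left a h2') (fun h => h1' (loc_unit_left h))
  add' := by
    intro a b c d h1 h2
    show ¬ IsUnit (a + c - (b + d))
    have h1' : ¬ IsUnit (a - b) := h1
    have h2' : ¬ IsUnit (c - d) := h2
    rw [show a + c - (b + d) = (a - b) + (c - d) by abel]
    exact loc_add h1' h2'

lemma nonunitsCon_eq_zero_iff (x : R) :
    (x : (nonunitsCon R).Quotient) = 0 ↔ ¬ IsUnit x := by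
  have h0 : (0 : (nonunitsCon R).Quotient) = ((0 : R) : (nonunitsCon R).Quotient) := rfl
  rw [h0, RingCon.eq]
  show ¬ IsUnit (x - 0) ↔ _
  rw [sub_zero]

instance : Nontrivial (nonunitsCon R).Quotient := by
  refine ⟨1, 0, fun h => ?_⟩
  have h1 : ((1 : R) : (nonunitsCon R).Quotient) = 0 := h
  rw [nonunitsCon_eq_zero_iff] at h1
  exact h1 isUnit_one

noncomputable instance : DivisionRing (nonunitsCon R).Quotient := by
  apply DivisionRing.ofIsUnitOrEqZero
  intro a
  obtain ⟨x, rfl⟩ := Quotient.exists_rep a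
  have hx : (Quotient.mk _ x : (nonunitsCon R).Quotient) = ((x : R) : (nonunitsCon R).Quotient) :=
    rfl
  rw [hx]
  by_cases h : IsUnit x
  · left
    exact h.map (nonunitsCon R).mk'
  · right
    exact (nonunitsCon_eq_zero_iff R x).mpr h

end Residue

section Bound

variable {R : Type*} [Ring R] [IsLocalRing R]

/-- Over a local ring, a family of pairwise orthogonal nonzero idempotent `m × m` matrices
has at most `m` members. -/
lemma card_le_of_orthogonal_idempotents {t m : ℕ} (F : Fin t → Matrix (Fin m) (Fin m) R)
    (hmul : ∀ i j, F i * F j = if i = j then F i else 0)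
    (hnz : ∀ i, F i ≠ 0) : t ≤ m := by
  classical
  -- each F i has a unit entry
  have hu : ∀ i, ∃ a b, IsUnit (F i a b) := by
    intro i
    by_contra hcon
    push_neg at hcon
    have hunit : IsUnit (1 - F i) := one_sub_isUnit m (F i) (fun a b => hcon a b)
    obtain ⟨W, hW1, hW2⟩ := isUnit_iff_exists.mp hunit
    have hzero : (1 - F i) * F i = 0 := by
      rw [sub_mul, one_mul, hmul i i, if_pos rfl, sub_self]
    have : F i = 0 := by
      calc F i = (W * (1 - F i)) * F i := by rw [hW2, one_mul]
      _ = W * ((1 - F i) * F i) := by rw [mul_assoc]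
      _ = 0 := by rw [hzero, mul_zero]
    exact hnz i this
  choose a b hab using hu
  -- work in the residue division ring
  set k := (nonunitsCon R).Quotient with hk
  set π : R →+* k := (nonunitsCon R).mk' with hπ
  set w : Fin t → (Fin m → k) := fun i x => π (F i (a i) x) with hw
  have hli : LinearIndependent k w := by
    rw [Fintype.linearIndependent_iff]
    intro g hg j
    have hgx : ∀ x, ∑ i, g i * w i x = 0 := by
      intro x
      have := congrFun hg x
      simpa [Finset.sum_apply] using this
    have key : (0 : k) = g j * π (F j (a j) (b j)) := by
      calc (0 : k) = ∑ x, (∑ i, g i * w i x) * π (F j x (b j)) := by simp [hgx]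
      _ = ∑ i, g i * π ((F i * F j) (a i) (b j)) := by
          rw [Finset.sum_congr rfl (fun x _ => Finset.sum_mul _ _ _)]
          rw [Finset.sum_comm]
          refine Finset.sum_congr rfl (fun i _ => ?_)
          simp only [hw, mul_assoc, ← Finset.mul_sum, ← _root_.map_mul, ← map_sum]
          rw [Matrix.mul_apply]
      _ = g j * π ((F j * F j) (a j) (b j)) := by
          refine Finset.sum_eq_single j (fun i _ hij => ?_) (by simp)
          rw [hmul i j, if_neg hij]
          simp
      _ = g j * π (F j (a j) (b j)) := by rw [hmul j j, if_pos rfl]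
    have hne : π (F j (a j) (b j)) ≠ 0 := by
      rw [hπ]
      show ¬ ((F j (a j) (b j) : R) : k) = 0
      rw [nonunitsCon_eq_zero_iff]
      simpa using hab j
    rcases mul_eq_zero.mp key.symm with h | h
    · exact h
    · exact absurd h hne
  calc t = Fintype.card (Fin t) := (Fintype.card_fin t).symm
  _ ≤ Module.finrank k (Fin m → k) := hli.fintype_card_le_finrank
  _ = m := by rw [Module.finrank_pi, Fintype.card_fin]

/-- Transporting the diagonal idempotents through a ring isomorphism. -/
lemma le_of_matrixRingEquiv {a c : ℕ}
    (f : Matrix (Fin a) (Fin a) R ≃+* Matrix (Fin c) (Fin c) R) : a ≤ c := by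
  classical
  apply card_le_of_orthogonal_idempotents (fun i => f (Matrix.single i i (1 : R)))
  · intro i j
    rw [← _root_.map_mul f]
    by_cases h : i = j
    · subst h
      rw [if_pos rfl, Matrix.single_mul_single_same, mul_one]
    · rw [if_neg h, Matrix.single_mul_single_of_ne 1 i i j (fun hc => h hc) 1, map_zero]
  · intro i hzero
    have h1 : Matrix.single i i (1 : R) = 0 := by
      apply f.injective
      rw [hzero, map_zero]
    have h2 := congrArg (fun M : Matrix (Fin a) (Fin a) R => M i i) h1
    simp at h2

end Bound

/-- Every local ring satisfies the `(n, m)`-condition: if the full matrix rings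
`M(n, R)` and `M(m, R)` are isomorphic, then `n = m`. -/
theorem localRing_nm_condition {R : Type*} [Ring R] [IsLocalRing R]
    (n m : ℕ) (hn : 0 < n) (hm : 0 < m)
    (e : Matrix (Fin n) (Fin n) R ≃+* Matrix (Fin m) (Fin m) R) :
    n = m :=
  le_antisymm (le_of_matrixRingEquiv e) (le_of_matrixRingEquiv e.symm)
end
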